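/- Let Ω ⊆ [n₁]×[n₂]×[n₃] with nonzero real observations Q_{ijk}. Suppose the system |Q_{ijk}| = u_i v_j w_k (u, v, w positive, u₁ = v₁ = 1) has a solution. Define c_{ijk} ∈ GF(2) by c_{ijk} = 0 if Q_{ijk} > 0 and c_{ijk} = 1 if Q_{ijk} < 0. Then a real rank-one completion a_i b_j c_k = Q_{ijk} with a₁ = b₁ = 1 exists if and only if the GF(2) linear system ε_i + ν_j + η_k = c_{ijk}, (i,j,k) ∈ Ω, with ε₁ = ν₁ = 0, has a solution. -/

import Mathlib

/-- sign in GF(2) -/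
private noncomputable def sgn2 (x : ℝ) : ZMod 2 := if x < 0 then 1 else 0

private lemma sgn2_mul {x y : ℝ} (hx : x ≠ 0) (hy : y ≠ 0) :
    sgn2 (x * y) = sgn2 x + sgn2 y := by
  unfold sgn2
  rcases hx.lt_or_gt with h | h <;> rcases hy.lt_or_gt with h' | h'
  · simp only [not_lt.2 (mul_pos_of_neg_of_neg h h').le, h, h', if_true, if_false,
      if_neg (not_lt.2 (mul_pos_of_neg_of_neg h h').le)]
    decide
  · simp [mul_neg_of_neg_of_pos h h', h, not_lt.2 h'.le]
  · simp [mul_neg_of_pos_of_neg h h', not_lt.2 h.le, h']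
  · simp [not_lt.2 (mul_pos h h').le, not_lt.2 h.le, not_lt.2 h'.le]

/-- real sign of a GF(2) element -/
private def rsgn (x : ZMod 2) : ℝ := if x = 0 then 1 else -1

private lemma zmod2_cases (x : ZMod 2) : x = 0 ∨ x = 1 := by
  fin_cases x; exacts [Or.inl rfl, Or.inr rfl]

private lemma rsgn_add (x y : ZMod 2) : rsgn (x + y) = rsgn x * rsgn y := by
  have h2 : (1 + 1 : ZMod 2) = 0 := by decide
  rcases zmod2_cases x with h | h <;> rcases zmod2_cases y with h' | h' <;>
    subst h <;> subst h' <;> simp [rsgn, h2]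

/-- Existence of a real rank-one completion is equivalent to solvability of the
sign system over GF(2), given solvability of the positive-part system. -/
theorem real_completion_iff_gf2_system
    (n₁ n₂ n₃ : ℕ)
    (Ω : Finset (Fin (n₁ + 1) × Fin (n₂ + 1) × Fin (n₃ + 1)))
    (Q : Fin (n₁ + 1) × Fin (n₂ + 1) × Fin (n₃ + 1) → ℝ)
    (hQ : ∀ t ∈ Ω, Q t ≠ 0)
    (cc : Fin (n₁ + 1) × Fin (n₂ + 1) × Fin (n₃ + 1) → ZMod 2)
    (hcc : ∀ t ∈ Ω, cc t = if 0 < Q t then 0 else 1)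
    (hpos : ∃ u : Fin (n₁ + 1) → ℝ, ∃ v : Fin (n₂ + 1) → ℝ, ∃ w : Fin (n₃ + 1) → ℝ,
      (∀ i, 0 < u i) ∧ (∀ j, 0 < v j) ∧ (∀ k, 0 < w k) ∧
      u 0 = 1 ∧ v 0 = 1 ∧ ∀ t ∈ Ω, |Q t| = u t.1 * v t.2.1 * w t.2.2) :
    (∃ a : Fin (n₁ + 1) → ℝ, ∃ b : Fin (n₂ + 1) → ℝ, ∃ c : Fin (n₃ + 1) → ℝ,
      a 0 = 1 ∧ b 0 = 1 ∧ ∀ t ∈ Ω, Q t = a t.1 * b t.2.1 * c t.2.2) ↔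
    (∃ ε : Fin (n₁ + 1) → ZMod 2, ∃ ν : Fin (n₂ + 1) → ZMod 2, ∃ η : Fin (n₃ + 1) → ZMod 2,
      ε 0 = 0 ∧ ν 0 = 0 ∧ ∀ t ∈ Ω, ε t.1 + ν t.2.1 + η t.2.2 = cc t) := by
  constructor
  · rintro ⟨a, b, c, ha0, hb0, hfac⟩
    refine ⟨fun i => sgn2 (a i), fun j => sgn2 (b j), fun k => sgn2 (c k), ?_, ?_, ?_⟩
    · simp [ha0, sgn2]
    · simp [hb0, sgn2]
    · intro t ht
      have hQt := hQ t ht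
      have h := hfac t ht
      have ha : a t.1 ≠ 0 := fun h0 => hQt (by simp [h, h0])
      have hb : b t.2.1 ≠ 0 := fun h0 => hQt (by simp [h, h0])
      have hc : c t.2.2 ≠ 0 := fun h0 => hQt (by simp [h, h0])
      have : sgn2 (Q t) = sgn2 (a t.1) + sgn2 (b t.2.1) + sgn2 (c t.2.2) := by
        rw [h, sgn2_mul (mul_ne_zero ha hb) hc, sgn2_mul ha hb]
      rw [← this, hcc t ht]
      rcases hQt.lt_or_gt with h' | h' <;> simp [sgn2, h', not_lt.2 h'.le]
  · rintro ⟨ε, ν, η, he0, hn0, hsys⟩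
    obtain ⟨u, v, w, hu, hv, hw, hu0, hv0, habs⟩ := hpos
    refine ⟨fun i => rsgn (ε i) * u i, fun j => rsgn (ν j) * v j,
      fun k => rsgn (η k) * w k, by simp [he0, rsgn, hu0], by simp [hn0, rsgn, hv0], ?_⟩
    intro t ht
    have h1 : rsgn (ε t.1) * u t.1 * (rsgn (ν t.2.1) * v t.2.1) * (rsgn (η t.2.2) * w t.2.2)
        = rsgn (ε t.1 + ν t.2.1 + η t.2.2) * (u t.1 * v t.2.1 * w t.2.2) := by
      rw [rsgn_add, rsgn_add]; ring
    rw [h1, hsys t ht, ← habs t ht, hcc t ht]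
    rcases (hQ t ht).lt_or_gt with h' | h' <;>
      simp [rsgn, abs_of_pos, abs_of_neg, h', not_lt.2 h'.le]
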